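/- The set of avoiders of [n] is closed under each of the three symmetries reverse∘complement, reverse∘inverse, and complement∘inverse; that is, if π is an avoider of [n], then so are r(c(π)), r(i(π)), and c(i(π)), where r denotes reverse, c denotes complement, and i denotes inverse. -/

import Mathlib

/-
Common definitions: permutations of {1,…,n} as words (lists), dashed
pattern avoidance, permutation statistics, and β(1,0)-trees with their
statistics, following the paper
"Decompositions and statistics for β(1,0)-trees and nonseparable permutations".
-/

namespace Beta10

attribute [local instance] Classical.propDecidable

/-- `l` is a permutation of `{1, …, n}` (written as a word). -/
def IsPermOf (n : ℕ) (l : List ℕ) : Prop := l.Perm (List.range' 1 n)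

/-- an occurrence of the dashed pattern 3-1-4-2 at positions `i < j < k < m` -/
def occ3142 (l : List ℕ) (i j k m : ℕ) : Prop :=
  i < j ∧ j < k ∧ k < m ∧ m < l.length ∧
  l.getD j 0 < l.getD m 0 ∧ l.getD m 0 < l.getD i 0 ∧ l.getD i 0 < l.getD k 0

def pat3142 (l : List ℕ) : Prop := ∃ i j k m, occ3142 l i j k m

/-- an occurrence of the dashed pattern 2-41-3 at positions `i < j, j+1 < k` -/
def occ2413 (l : List ℕ) (i j k : ℕ) : Prop :=
  i < j ∧ j + 1 < k ∧ k < l.length ∧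
  l.getD (j+1) 0 < l.getD i 0 ∧ l.getD i 0 < l.getD k 0 ∧ l.getD k 0 < l.getD j 0

def pat2413 (l : List ℕ) : Prop := ∃ i j k, occ2413 l i j k

/-- an *avoider*: a permutation of `{1,…,n}` avoiding 3-1-4-2 and 2-41-3 -/
def Avoider (n : ℕ) (l : List ℕ) : Prop := IsPermOf n l ∧ ¬ pat3142 l ∧ ¬ pat2413 l

/-- direct sum of permutations -/
def dsum (σ τ : List ℕ) : List ℕ := σ ++ τ.map (· + σ.length)

/-- a nonempty permutation that is not a direct sum of two nonempty permutations -/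
def Indecomposable (l : List ℕ) : Prop :=
  l ≠ [] ∧ ¬ ∃ σ τ : List ℕ, σ ≠ [] ∧ τ ≠ [] ∧ l = dsum σ τ

/-- position `p` holds a left-to-right maximum of `l` -/
def IsLRMax (l : List ℕ) (p : ℕ) : Prop :=
  p < l.length ∧ ∀ j < p, l.getD j 0 < l.getD p 0

/-- position `p` holds a left-to-right minimum of `l` -/
def IsLRMin (l : List ℕ) (p : ℕ) : Prop :=
  p < l.length ∧ ∀ j < p, l.getD p 0 < l.getD j 0

/-- position `p` holds a right-to-left maximum of `l` -/
def IsRLMax (l : List ℕ) (p : ℕ) : Prop :=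
  p < l.length ∧ ∀ j < l.length, p < j → l.getD j 0 < l.getD p 0

/-- the number of left-to-right maxima -/
noncomputable def lmax (l : List ℕ) : ℕ :=
  ((Finset.range l.length).filter (fun p => IsLRMax l p)).card

/-- the number of left-to-right minima -/
noncomputable def lmin (l : List ℕ) : ℕ :=
  ((Finset.range l.length).filter (fun p => IsLRMin l p)).card

/-- the number of right-to-left maxima -/
noncomputable def rmax (l : List ℕ) : ℕ :=
  ((Finset.range l.length).filter (fun p => IsRLMax l p)).card

/-- the number of ascents -/
noncomputable def asc (l : List ℕ) : ℕ :=
  ((Finset.range (l.length - 1)).filter (fun p => l.getD p 0 < l.getD (p+1) 0)).card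

/-- the number of descents -/
noncomputable def des (l : List ℕ) : ℕ :=
  ((Finset.range (l.length - 1)).filter (fun p => l.getD (p+1) 0 < l.getD p 0)).card

/-- `ldr l` : the largest `i` with `a₁ > a₂ > ⋯ > aᵢ` (and `0` for the empty word) -/
noncomputable def ldr (l : List ℕ) : ℕ :=
  ((Finset.range (l.length + 1)).filter
    (fun i => ∀ j, j + 1 < i → l.getD (j+1) 0 < l.getD j 0)).sup id

/-- `lir l` : the largest `i` with `a₁ < a₂ < ⋯ < aᵢ` (and `0` for the empty word) -/
noncomputable def lir (l : List ℕ) : ℕ :=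
  ((Finset.range (l.length + 1)).filter
    (fun i => ∀ j, j + 1 < i → l.getD j 0 < l.getD (j+1) 0)).sup id

/-- the factor of `l` occupying positions `p, …, q-1` is a component of `l`:
it is nonempty, all letters before it are smaller, all letters after it are
larger, and it admits no nontrivial splitting `αβ` with `α ≺ β`. -/
def IsComponent (l : List ℕ) (p q : ℕ) : Prop :=
  p < q ∧ q ≤ l.length ∧
  (∀ i < p, ∀ j, p ≤ j → j < q → l.getD i 0 < l.getD j 0) ∧
  (∀ j, p ≤ j → j < q → ∀ i, q ≤ i → i < l.length → l.getD j 0 < l.getD i 0) ∧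
  ¬ ∃ r, p < r ∧ r < q ∧ ∀ i, p ≤ i → i < r → ∀ j, r ≤ j → j < q → l.getD i 0 < l.getD j 0

/-- the number of components of `l` -/
noncomputable def comp (l : List ℕ) : ℕ :=
  (((Finset.range (l.length + 1)) ×ˢ (Finset.range (l.length + 1))).filter
    (fun pq => IsComponent l pq.1 pq.2)).card

/-- insert the letter `a` into `l` so that it occupies (0-based) position `r` -/
def insertAt (l : List ℕ) (r : ℕ) (a : ℕ) : List ℕ := l.take r ++ a :: l.drop r

/-- the (0-based) positions of the left-to-right maxima, from left to right -/
noncomputable def lrMaxPos (l : List ℕ) : List ℕ :=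
  (List.range l.length).filter (fun p => decide (IsLRMax l p))

/-- the finite set of avoiders of `{1,…,n}` -/
noncomputable def avoidersFinset (n : ℕ) : Finset (List ℕ) :=
  ((List.range' 1 n).permutations.toFinset).filter (fun l => ¬ pat3142 l ∧ ¬ pat2413 l)

/-- reverse of a permutation -/
def revP (l : List ℕ) : List ℕ := l.reverse

/-- complement of a permutation of `{1,…,n}` -/
def complP (n : ℕ) (l : List ℕ) : List ℕ := l.map (fun a => n + 1 - a)

/-- inverse of a permutation of `{1,…,n}` (as a word: the `v`-th letter is the
position of the letter `v` in `l`, 1-based) -/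
def invP (l : List ℕ) : List ℕ :=
  (List.range' 1 l.length).map (fun v => l.idxOf v + 1)

/-- rooted plane trees with nodes labeled by natural numbers -/
inductive PTree : Type where
  | node : ℕ → List PTree → PTree

namespace PTree

/-- the label of the root -/
def label : PTree → ℕ | node l _ => l

/-- the list of subtrees of the root -/
def children : PTree → List PTree | node _ cs => cs

/-- the number of nodes -/
def size : PTree → ℕ
  | node _ cs => 1 + (cs.attach.map (fun x => size x.1)).sum
decreasing_by have := List.sizeOf_lt_of_mem x.2; simp at this ⊢; omega

/-- the number of leaves -/
def leaves : PTree → ℕ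
  | node _ [] => 1
  | node _ (c :: cs) => ((c :: cs).attach.map (fun x => leaves x.1)).sum
decreasing_by have := List.sizeOf_lt_of_mem x.2; simp at this ⊢; omega

/-- the number of internal (non-leaf) nodes; the root counts as internal -/
def internalN : PTree → ℕ
  | node _ [] => 0
  | node _ (c :: cs) => 1 + ((c :: cs).attach.map (fun x => internalN x.1)).sum
decreasing_by have := List.sizeOf_lt_of_mem x.2; simp at this ⊢; omega

/-- the number of children of the root -/
def subT (t : PTree) : ℕ := t.children.length

/-- the number of edges on the path from the root to the leftmost leaf -/
def lpath : PTree → ℕ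
  | node _ [] => 0
  | node _ (c :: _) => lpath c + 1

mutual
/-- the number of edges on the path from the root to the rightmost leaf -/
def rpath : PTree → ℕ
  | .node _ [] => 0
  | .node _ (c :: cs) => rpathAux c cs + 1
termination_by t => sizeOf t
def rpathAux : PTree → List PTree → ℕ
  | c, [] => rpath c
  | _, c' :: cs => rpathAux c' cs
termination_by c cs => sizeOf c + sizeOf cs
end

/-- the number of nodes with label 1, other than the root, on the path from
the root to the leftmost leaf -/
def lsub : PTree → ℕ
  | node _ [] => 0
  | node _ (c :: _) => lsub c + (if c.label = 1 then 1 else 0)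

mutual
/-- the number of nodes with label 1, other than the root, on the path from
the root to the rightmost leaf -/
def rsub : PTree → ℕ
  | .node _ [] => 0
  | .node _ (c :: cs) => rsubAux c cs
termination_by t => sizeOf t
def rsubAux : PTree → List PTree → ℕ
  | c, [] => rsub c + (if c.label = 1 then 1 else 0)
  | _, c' :: cs => rsubAux c' cs
termination_by c cs => sizeOf c + sizeOf cs
end

/-- the number of internal nodes common to the left path and the right path -/
def stem : PTree → ℕ
  | node _ [] => 0
  | node _ [c] => stem c + 1
  | node _ (_ :: _ :: _) => 1

/-- `tsum u v = u ⊕ v`: the subtrees of the root are those of `u` followed by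
those of `v`, and the root label is the sum of the root labels -/
def tsum (u v : PTree) : PTree := node (u.label + v.label) (u.children ++ v.children)

/-- `lam i t = λ(i, t)`: join a new root via an edge to the old root; both the
new root and the old root get the label `i` -/
def lam (i : ℕ) (t : PTree) : PTree := node i [node i t.children]

/-- the one-edge tree (two nodes, both labeled 1) -/
def edgeT : PTree := node 1 [node 1 []]

/-- `iterEdge k = ⊕^k edgeT`, the `k`-fold sum of one-edge trees -/
def iterEdge : ℕ → PTree
  | 0 => node 0 []
  | k + 1 => tsum edgeT (iterEdge k)

/-- does the path from the root to the leftmost leaf contain a node,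
other than the leaf itself, with label 1? -/
def leftPathOne : PTree → Bool
  | node _ [] => false
  | node l (c :: _) => (l == 1) || leftPathOne c

/-- delete the leftmost leaf and decrease by 1 the labels of all nodes on the
path from the root to it -/
def delLeft : PTree → PTree
  | node l [] => node l []
  | node l (node _ [] :: cs) => node (l - 1) cs
  | node l (c :: cs) => node (l - 1) (delLeft c :: cs)

/-- iterate: if the path from the root to the leftmost leaf contains a node
(other than that leaf) with label 1, stop and report 1 plus the number of
leaves already deleted; otherwise delete the leftmost leaf (decreasing the
labels on its path) and continue -/
def stemGo : ℕ → PTree → ℕ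
  | 0, _ => 0
  | fuel + 1, t => if leftPathOne t then 1 else 1 + stemGo fuel (delLeft t)

/-- the statistic stem′ of the paper: the index of the first leaf (from the
left) whose path to the root contains a node, other than the leaf itself,
with label 1, in the iterated leaf-deletion process -/
def stemP (t : PTree) : ℕ := stemGo t.size t

/-- the mirror image: recursively reverse the order of subtrees -/
def mirror : PTree → PTree
  | node l cs => node l ((cs.attach.map (fun x => mirror x.1)).reverse)
decreasing_by have := List.sizeOf_lt_of_mem x.2; simp at this ⊢; omega

/-- the statistic stem~ : stem′ of the mirror image -/
def stemM (t : PTree) : ℕ := stemP (mirror t)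

/-- `obs u v = u ⊘ v`: identify the rightmost leaf of `u` with the root of `v`;
the identified node gets label 1 -/
def obs : PTree → PTree → PTree
  | node _ [], v => node 1 v.children
  | node l [c], v => node l [obs c v]
  | node l (c :: c' :: cs), v => node l (c :: (obs (node l (c' :: cs)) v).children)
termination_by u _ => sizeOf u
decreasing_by all_goals (simp; try omega)

/-- validity of a non-root node of a β(1,0)-tree (together with all of its
descendants): a leaf has label 1, and any other node has a positive label
that is at most the sum of its children's labels -/
inductive IsBetaSub : PTree → Prop where
  | mk (l : ℕ) (cs : List PTree)
      (hleaf : cs = [] → l = 1)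
      (hinternal : cs ≠ [] → 1 ≤ l ∧ l ≤ (cs.map label).sum)
      (hchildren : ∀ c ∈ cs, IsBetaSub c) : IsBetaSub (node l cs)

end PTree

/-- `t` is a β(1,0)-tree: the root label equals the sum of the children's
labels, and every non-root node is valid -/
def IsBeta (t : PTree) : Prop :=
  t.label = (t.children.map PTree.label).sum ∧ ∀ c ∈ t.children, PTree.IsBetaSub c

end Beta10

namespace Beta10


/-- helper: a nodup list of `n` values in `{1,…,n}` is a permutation of it -/
lemma perm_range'_of (n : ℕ) {L : List ℕ} (h1 : L.Nodup)
    (h2 : ∀ x ∈ L, 1 ≤ x ∧ x ≤ n) (h3 : L.length = n) :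
    L.Perm (List.range' 1 n) := by
  refine (List.subperm_of_subset h1 ?_).perm_of_length_le
    (by simp [List.length_range', h3])
  intro x hx
  rcases h2 x hx with ⟨h4, h5⟩
  exact List.mem_range'_1.mpr ⟨h4, by omega⟩

lemma permOf_length {n : ℕ} {l : List ℕ} (h : IsPermOf n l) : l.length = n := by
  simpa using h.length_eq

lemma permOf_nodup {n : ℕ} {l : List ℕ} (h : IsPermOf n l) : l.Nodup :=
  h.nodup_iff.mpr (List.nodup_range' (s := 1) (n := n))

lemma permOf_getD_bounds {n : ℕ} {l : List ℕ} (h : IsPermOf n l) {p : ℕ}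
    (hp : p < l.length) : 1 ≤ l.getD p 0 ∧ l.getD p 0 ≤ n := by
  have hm : l.getD p 0 ∈ l := by
    rw [List.getD_eq_getElem _ 0 hp]; exact List.getElem_mem hp
  have := List.mem_range'_1.mp (h.subset hm)
  omega

lemma permOf_indexOf {n : ℕ} {l : List ℕ} (h : IsPermOf n l) {v : ℕ}
    (h1 : 1 ≤ v) (h2 : v ≤ n) :
    l.idxOf v < l.length ∧ l.getD (l.idxOf v) 0 = v := by
  have hv : v ∈ l := h.mem_iff.mpr (List.mem_range'_1.mpr ⟨h1, by omega⟩)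
  have hlt : l.idxOf v < l.length := List.idxOf_lt_length_iff.mpr hv
  refine ⟨hlt, ?_⟩
  rw [List.getD_eq_getElem _ 0 hlt]
  exact List.getElem_idxOf hlt

/-- key lemma: an occurrence of the classical pattern 2-4-1-3 in which the
values playing the roles of 2 and 3 are consecutive forces 2-41-3 -/
lemma key2413_aux {l : List ℕ} (hnd : l.Nodup) :
    ∀ gap q1 q2 q3 q4, q3 - q2 ≤ gap → q1 < q2 → q2 < q3 → q3 < q4 → q4 < l.length →
      l.getD q3 0 < l.getD q1 0 → l.getD q4 0 = l.getD q1 0 + 1 →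
      l.getD q4 0 < l.getD q2 0 → pat2413 l := by
  intro gap
  induction gap with
  | zero => intro q1 q2 q3 q4 hg _ h23 _ _ _ _ _; omega
  | succ g ih =>
    intro q1 q2 q3 q4 hg h12 h23 h34 h4 hd hb ha
    by_cases hadj : q3 = q2 + 1
    · subst hadj
      exact ⟨q1, q2, q4, h12, by omega, h4, hd, by omega, ha⟩
    · have hplen : q2 + 1 < l.length := by omega
      have hne1 : l.getD (q2+1) 0 ≠ l.getD q1 0 := by
        rw [List.getD_eq_getElem _ 0 hplen,
          List.getD_eq_getElem _ 0 (show q1 < l.length by omega)]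
        intro hh
        have := (hnd.getElem_inj_iff).mp hh
        omega
      have hne4 : l.getD (q2+1) 0 ≠ l.getD q4 0 := by
        rw [List.getD_eq_getElem _ 0 hplen, List.getD_eq_getElem _ 0 h4]
        intro hh
        have := (hnd.getElem_inj_iff).mp hh
        omega
      by_cases hu : l.getD (q2+1) 0 < l.getD q1 0
      · exact ⟨q1, q2, q4, h12, by omega, h4, hu, by omega, ha⟩
      · exact ih q1 (q2+1) q3 q4 (by omega) (by omega) (by omega) h34 h4 hd hb (by omega)

lemma key2413 {l : List ℕ} (hnd : l.Nodup) {q1 q2 q3 q4 : ℕ}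
    (h12 : q1 < q2) (h23 : q2 < q3) (h34 : q3 < q4) (h4 : q4 < l.length)
    (hd : l.getD q3 0 < l.getD q1 0) (hb : l.getD q4 0 = l.getD q1 0 + 1)
    (ha : l.getD q4 0 < l.getD q2 0) : pat2413 l :=
  key2413_aux hnd (q3 - q2) q1 q2 q3 q4 le_rfl h12 h23 h34 h4 hd hb ha

lemma getD_revP {l : List ℕ} {p : ℕ} (hp : p < l.length) :
    (revP l).getD p 0 = l.getD (l.length - 1 - p) 0 := by
  rw [revP, List.getD_eq_getElem _ 0 (by simpa using hp),
    List.getD_eq_getElem _ 0 (by omega), List.getElem_reverse]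

lemma getD_complP {n : ℕ} {l : List ℕ} {p : ℕ} (hp : p < l.length) :
    (complP n l).getD p 0 = n + 1 - l.getD p 0 := by
  rw [complP, List.getD_eq_getElem _ 0 (by simpa using hp), List.getElem_map,
    List.getD_eq_getElem _ 0 hp]

lemma getD_invP {l : List ℕ} {p : ℕ} (hp : p < l.length) :
    (invP l).getD p 0 = l.idxOf (1 + p) + 1 := by
  rw [invP, List.getD_eq_getElem _ 0 (by simpa using hp), List.getElem_map,
    List.getElem_range']
  norm_num

/-- avoiders are closed under reverse ∘ complement -/
lemma avoider_revP_complP {n : ℕ} {l : List ℕ} (h : Avoider n l) :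
    Avoider n (revP (complP n l)) := by
  obtain ⟨hperm, h31, h24⟩ := h
  have hlen : l.length = n := permOf_length hperm
  have hb : ∀ p, p < n → 1 ≤ l.getD p 0 ∧ l.getD p 0 ≤ n := by
    intro p hp; exact permOf_getD_bounds hperm (by omega)
  have hσlen : (revP (complP n l)).length = n := by simp [revP, complP, hlen]
  have e1 : (complP n l).length = n := by simp [complP, hlen]
  have hσ : ∀ p, p < n → (revP (complP n l)).getD p 0 = n + 1 - l.getD (n - 1 - p) 0 := by
    intro p hp
    have h1 : p < (complP n l).length := by omega
    rw [getD_revP h1, e1, getD_complP (show n - 1 - p < l.length by omega)]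
  refine ⟨?_, ?_, ?_⟩
  · have hnodup : (complP n l).Nodup := by
      refine List.Nodup.map_on ?_ (permOf_nodup hperm)
      intro x hx y hy hxy
      have hx' := List.mem_range'_1.mp (hperm.subset hx)
      have hy' := List.mem_range'_1.mp (hperm.subset hy)
      omega
    have hpc : (complP n l).Perm (List.range' 1 n) := by
      refine perm_range'_of n hnodup ?_ e1
      intro x hx
      rw [complP] at hx
      obtain ⟨a, ha, rfl⟩ := List.mem_map.mp hx
      have := List.mem_range'_1.mp (hperm.subset ha)
      omega
    exact (List.reverse_perm _).trans hpc
  · rintro ⟨i, j, k, m, h1, h2, h3, h4, h5, h6, h7⟩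
    rw [hσlen] at h4
    have e_i := hσ i (by omega)
    have e_j := hσ j (by omega)
    have e_k := hσ k (by omega)
    have e_m := hσ m (by omega)
    rw [e_j, e_m] at h5
    rw [e_m, e_i] at h6
    rw [e_i, e_k] at h7
    have b_i := hb (n-1-i) (by omega)
    have b_j := hb (n-1-j) (by omega)
    have b_k := hb (n-1-k) (by omega)
    have b_m := hb (n-1-m) (by omega)
    exact h31 ⟨n-1-m, n-1-k, n-1-j, n-1-i,
      by omega, by omega, by omega, by omega, by omega, by omega, by omega⟩
  · rintro ⟨i, j, k, h1, h2, h3, h5, h6, h7⟩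
    rw [hσlen] at h3
    have e_i := hσ i (by omega)
    have e_j := hσ j (by omega)
    have e_j1 := hσ (j+1) (by omega)
    have e_k := hσ k (by omega)
    rw [e_j1, e_i] at h5
    rw [e_i, e_k] at h6
    rw [e_k, e_j] at h7
    have b_i := hb (n-1-i) (by omega)
    have b_j := hb (n-1-j) (by omega)
    have b_j1 := hb (n-1-(j+1)) (by omega)
    have b_k := hb (n-1-k) (by omega)
    refine h24 ⟨n-1-k, n-1-(j+1), n-1-i, by omega, by omega, by omega, ?_, by omega, by omega⟩
    rw [show n-1-(j+1)+1 = n-1-j from by omega]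
    omega

/-- avoiders are closed under reverse ∘ inverse -/
lemma avoider_revP_invP {n : ℕ} {l : List ℕ} (h : Avoider n l) :
    Avoider n (revP (invP l)) := by
  obtain ⟨hperm, h31, h24⟩ := h
  have hlen : l.length = n := permOf_length hperm
  have hnd : l.Nodup := permOf_nodup hperm
  have hσlen : (revP (invP l)).length = n := by simp [revP, invP, hlen]
  have hidx : ∀ v, 1 ≤ v → v ≤ n → l.idxOf v < l.length ∧ l.getD (l.idxOf v) 0 = v :=
    fun v h1 h2 => permOf_indexOf hperm h1 h2
  have e1 : (invP l).length = n := by simp [invP, hlen]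
  have hσ : ∀ p, p < n → (revP (invP l)).getD p 0 = l.idxOf (n - p) + 1 := by
    intro p hp
    have h1 : p < (invP l).length := by omega
    rw [getD_revP h1, e1, getD_invP (show n - 1 - p < l.length by omega),
      show 1 + (n - 1 - p) = n - p from by omega]
  refine ⟨?_, ?_, ?_⟩
  · have hnodup : (invP l).Nodup := by
      rw [invP]
      refine List.Nodup.map_on ?_ (List.nodup_range' (s := 1) (n := l.length))
      intro x hx y hy hxy
      have hx' := List.mem_range'_1.mp hx
      have hy' := List.mem_range'_1.mp hy
      have ex := (hidx x hx'.1 (by omega)).2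
      have ey := (hidx y hy'.1 (by omega)).2
      have hxy' : l.idxOf x = l.idxOf y := by omega
      rw [← ex, ← ey, hxy']
    have hip : (invP l).Perm (List.range' 1 n) := by
      refine perm_range'_of n hnodup ?_ e1
      intro x hx
      rw [invP] at hx
      obtain ⟨v, hv, rfl⟩ := List.mem_map.mp hx
      have hv' := List.mem_range'_1.mp hv
      have := (hidx v hv'.1 (by omega)).1
      omega
    exact (List.reverse_perm _).trans hip
  · rintro ⟨i, j, k, m, h1, h2, h3, h4, h5, h6, h7⟩
    rw [hσlen] at h4
    have e_i := hσ i (by omega)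
    have e_j := hσ j (by omega)
    have e_k := hσ k (by omega)
    have e_m := hσ m (by omega)
    rw [e_j, e_m] at h5
    rw [e_m, e_i] at h6
    rw [e_i, e_k] at h7
    obtain ⟨P1, V1⟩ := hidx (n-j) (by omega) (by omega)
    obtain ⟨P2, V2⟩ := hidx (n-m) (by omega) (by omega)
    obtain ⟨P3, V3⟩ := hidx (n-i) (by omega) (by omega)
    obtain ⟨P4, V4⟩ := hidx (n-k) (by omega) (by omega)
    exact h31 ⟨l.idxOf (n-j), l.idxOf (n-m), l.idxOf (n-i), l.idxOf (n-k),
      by omega, by omega, by omega, by omega, by omega, by omega, by omega⟩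
  · rintro ⟨i, j, k, h1, h2, h3, h5, h6, h7⟩
    rw [hσlen] at h3
    have e_i := hσ i (by omega)
    have e_j := hσ j (by omega)
    have e_j1 := hσ (j+1) (by omega)
    have e_k := hσ k (by omega)
    rw [e_j1, e_i] at h5
    rw [e_i, e_k] at h6
    rw [e_k, e_j] at h7
    obtain ⟨P1, V1⟩ := hidx (n-(j+1)) (by omega) (by omega)
    obtain ⟨P2, V2⟩ := hidx (n-i) (by omega) (by omega)
    obtain ⟨P3, V3⟩ := hidx (n-k) (by omega) (by omega)
    obtain ⟨P4, V4⟩ := hidx (n-j) (by omega) (by omega)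
    exact h24 (key2413 hnd (q1 := l.idxOf (n-(j+1))) (q2 := l.idxOf (n-i))
      (q3 := l.idxOf (n-k)) (q4 := l.idxOf (n-j))
      (by omega) (by omega) (by omega) P4 (by omega) (by omega) (by omega))

lemma revP_complP_revP (n : ℕ) (x : List ℕ) :
    revP (complP n (revP x)) = complP n x := by
  simp [revP, complP, List.map_reverse]

/-- The set of avoiders of `{1,…,n}` is closed under the
symmetries reverse∘complement, reverse∘inverse and complement∘inverse. -/
theorem statement_18 (n : ℕ) (l : List ℕ) (h : Avoider n l) :
    Avoider n (revP (complP n l)) ∧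
    Avoider n (revP (invP l)) ∧
    Avoider n (complP n (invP l)) := by
  have h2 := avoider_revP_invP h
  have h3 := avoider_revP_complP h2
  rw [revP_complP_revP] at h3
  exact ⟨avoider_revP_complP h, h2, h3⟩

end Beta10
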